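/- Let μ be a probability measure on a group G ≤ SL_d(ℤ) satisfying: there exist λ > 0 and C > 0 such that for every x ∈ 𝕋^d, every 0 < t < 1/2 and every a ∈ ℤ^d \ {0}, if |Fourier coefficient of μ^{*n} * δ_x at a| ≥ t and n ≥ C log(‖a‖/t), then there exist q ∈ ℤ_{>0} with q < (‖a‖/t)^C and x' ∈ (1/q)ℤ^d/ℤ^d with d(x, x') ≤ e^{−λn}. Then: (i) for every rational x = v/q ∈ 𝕋^d with v ∈ ℤ^d, gcd(v, q) = 1, and every a ∈ ℤ^d \ {0}, limsup_{n→∞} |\widehat{μ^{*n} * δ_x}(a)| ≤ 2‖a‖ q^{−1/C}; (ii) for every irrational y ∈ 𝕋^d and every a ∈ ℤ^d \ {0}, limsup_{n→∞} |\widehat{μ^{*n} * δ_y}(a)| = 0. -/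

import Mathlib

open MeasureTheory Filter

noncomputable section

instance {d : ℕ} : MeasurableSpace (Matrix.SpecialLinearGroup (Fin d) ℤ) := ⊤

/-- `e(x) = exp(2πix)` on the circle `𝕋 = ℝ/ℤ`. -/
def eT (x : AddCircle (1 : ℝ)) : ℂ := AddCircle.toCircle x

/-- The action of an element of `SL_d(ℤ)` on the torus `𝕋^d`. -/
def slAct {d : ℕ} (g : Matrix.SpecialLinearGroup (Fin d) ℤ)
    (x : Fin d → AddCircle (1 : ℝ)) : Fin d → AddCircle (1 : ℝ) :=
  fun i => ∑ j, (g : Matrix (Fin d) (Fin d) ℤ) i j • x j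

/-- The Fourier coefficient of a measure `ν` on `𝕋^d` at the frequency `a ∈ ℤ^d`. -/
def fourierCoef {d : ℕ} (ν : Measure (Fin d → AddCircle (1 : ℝ)))
    (a : Fin d → ℤ) : ℂ :=
  ∫ u, eT (∑ j, a j • u j) ∂ν

/-- `μ^{*n} * δ_x` : the distribution of `g_1 ⋯ g_n • x` when `g_1, …, g_n` are
i.i.d. with law `μ` on `G ≤ SL_d(ℤ)`. -/
def walkMeasure {d : ℕ} (G : Subgroup (Matrix.SpecialLinearGroup (Fin d) ℤ))
    (μ : Measure G) (n : ℕ) (x : Fin d → AddCircle (1 : ℝ)) :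
    Measure (Fin d → AddCircle (1 : ℝ)) :=
  Measure.map
    (fun gs : Fin n → G =>
      slAct (((List.ofFn gs).prod : G) : Matrix.SpecialLinearGroup (Fin d) ℤ) x)
    (Measure.pi fun _ => μ)

/-- Sup norm of an integer vector. -/
def znorm {d : ℕ} (a : Fin d → ℤ) : ℝ := ‖fun i => ((a i : ℝ))‖

instance {d : ℕ} : Countable (Matrix.SpecialLinearGroup (Fin d) ℤ) := by
  have : Countable (Matrix (Fin d) (Fin d) ℤ) := by unfold Matrix; infer_instance
  unfold Matrix.SpecialLinearGroup; infer_instance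

instance {d : ℕ} : MeasurableSingletonClass (Matrix.SpecialLinearGroup (Fin d) ℤ) :=
  ⟨fun _ => trivial⟩


lemma coe_mod_div (v : ℤ) (q : ℕ) (hq : 0 < q) :
    (((v : ℝ) / q : ℝ) : AddCircle (1:ℝ)) = ((((v % q : ℤ) : ℝ) / q : ℝ) : AddCircle (1:ℝ)) := by
  rw [QuotientAddGroup.eq_iff_sub_mem]
  refine AddSubgroup.mem_zmultiples_iff.mpr ⟨v / q, ?_⟩
  have hq' : (q:ℝ) ≠ 0 := by positivity
  rw [zsmul_eq_mul, mul_one, div_sub_div_same, eq_div_iff hq']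
  have : ((v / (q:ℤ)) * q : ℤ) = v - v % q := by have := Int.mul_ediv_add_emod v (q:ℤ); linarith
  exact_mod_cast this

instance {d n : ℕ} (G : Subgroup (Matrix.SpecialLinearGroup (Fin d) ℤ))
    (μ : Measure G) [IsProbabilityMeasure μ] (x : Fin d → AddCircle (1:ℝ)) :
    IsProbabilityMeasure (walkMeasure G μ n x) :=
  Measure.isProbabilityMeasure_map (measurable_of_countable _).aemeasurable

lemma fourierCoef_abs_le {d : ℕ} (ν : Measure (Fin d → AddCircle (1 : ℝ)))
    [IsProbabilityMeasure ν] (a : Fin d → ℤ) :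
    ‖fourierCoef ν a‖ ≤ 1 := by
  calc ‖fourierCoef ν a‖ ≤ 1 * (ν Set.univ).toReal := by
        refine norm_integral_le_of_norm_le_const (Eventually.of_forall fun u => ?_)
        exact le_of_eq (Circle.norm_coe _)
    _ = 1 := by simp

/-- The set of rational points with denominator at most `N`. -/
def ratSet (d N : ℕ) : Set (Fin d → AddCircle (1:ℝ)) :=
  {x | ∃ (q : ℕ) (v : Fin d → ℤ), 0 < q ∧ q ≤ N ∧
    x = fun i => (((v i : ℝ) / q : ℝ) : AddCircle (1:ℝ))}

lemma ratSet_finite (d N : ℕ) : (ratSet d N).Finite := by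
  have : ratSet d N ⊆ Set.range (fun p : Fin (N+1) × (Fin d → Fin (N+1)) =>
      fun i => ((((p.2 i : ℕ) : ℝ) / (p.1 : ℕ) : ℝ) : AddCircle (1:ℝ))) := by
    rintro x ⟨q, v, hq, hqN, rfl⟩
    refine ⟨(⟨q, by omega⟩, fun i => ⟨(v i % q).toNat, ?_⟩), ?_⟩
    · have h1 : (0:ℤ) ≤ v i % q := Int.emod_nonneg _ (by positivity)
      have h2 : v i % q < q := Int.emod_lt_of_pos _ (by exact_mod_cast hq)
      omega
    · funext i
      simp only
      rw [coe_mod_div (v i) q hq]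
      congr 2
      have h1 : (0:ℤ) ≤ v i % q := Int.emod_nonneg _ (by positivity)
      exact_mod_cast congrArg (Int.cast : ℤ → ℝ) (Int.toNat_of_nonneg h1)
  exact (Set.finite_range _).subset this

lemma dvd_of_eq_rat {d : ℕ} (q q' : ℕ) (v v' : Fin d → ℤ) (hq : 0 < q) (hq' : 0 < q')
    (hco : Int.gcd (Finset.univ.gcd v) (q : ℤ) = 1)
    (heq : (fun i => (((v i : ℝ) / q : ℝ) : AddCircle (1:ℝ)))
         = fun i => (((v' i : ℝ) / q' : ℝ) : AddCircle (1:ℝ))) : q ∣ q' := by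
  have hdvd : ∀ i, (q:ℤ) ∣ v i * q' := by
    intro i
    have h := congrFun heq i
    rw [QuotientAddGroup.eq_iff_sub_mem] at h
    obtain ⟨k, hk⟩ := AddSubgroup.mem_zmultiples_iff.mp h
    rw [zsmul_eq_mul, mul_one] at hk
    have hqR : (q:ℝ) ≠ 0 := by positivity
    have hq'R : (q':ℝ) ≠ 0 := by positivity
    have hZ : v i * q' - v' i * q = k * q * q' := by
      have : ((v i * q' - v' i * q : ℤ) : ℝ) = ((k * q * q' : ℤ) : ℝ) := by
        push_cast
        field_simp at hk ⊢
        linarith [hk]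
      exact_mod_cast this
    exact ⟨v' i + k * q', by linarith [hZ]⟩
  have hg : (q:ℤ) ∣ (Finset.univ.gcd v) * q' := by
    have h1 : (q:ℤ) ∣ Finset.univ.gcd (fun i => v i * (q':ℤ)) :=
      Finset.dvd_gcd fun i _ => hdvd i
    rwa [Finset.gcd_mul_right, Int.normalize_of_nonneg (by positivity)] at h1
  have : (q:ℤ) ∣ (q':ℤ) := by
    refine Int.dvd_of_dvd_mul_right_of_gcd_one hg ?_
    rw [Int.gcd_comm]; exact hco
  exact_mod_cast this

lemma znorm_pos {d : ℕ} {a : Fin d → ℤ} (ha : a ≠ 0) : 0 < znorm a := by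
  have h : (fun i => ((a i : ℝ))) ≠ 0 := by
    intro h
    apply ha
    funext i
    have := congrFun h i
    simp only [Pi.zero_apply] at this ⊢
    exact_mod_cast this
  unfold znorm
  exact norm_pos_iff.mpr h

lemma eventually_key {d : ℕ} (G : Subgroup (Matrix.SpecialLinearGroup (Fin d) ℤ))
    (μ : Measure G) [IsProbabilityMeasure μ] (lam C : ℝ) (hlam : 0 < lam)
    (hyp : ∀ (x : Fin d → AddCircle (1 : ℝ)) (t : ℝ), 0 < t → t < 1 / 2 →
      ∀ a : Fin d → ℤ, a ≠ 0 → ∀ n : ℕ,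
        t ≤ ‖fourierCoef (walkMeasure G μ n x) a‖ →
        C * Real.log (znorm a / t) ≤ n →
        ∃ (q : ℕ) (v : Fin d → ℤ), 0 < q ∧ (q : ℝ) < (znorm a / t) ^ C ∧
          dist x (fun i => (((v i : ℝ) / q : ℝ) : AddCircle (1 : ℝ)))
            ≤ Real.exp (-lam * n))
    (x : Fin d → AddCircle (1:ℝ)) (a : Fin d → ℤ) (ha : a ≠ 0)
    (t : ℝ) (ht0 : 0 < t) (ht2 : t < 1/2) (N : ℕ)
    (hN : ∀ q : ℕ, 0 < q → (q:ℝ) < (znorm a / t) ^ C → q ≤ N)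
    (hx : x ∉ ratSet d N) :
    ∀ᶠ n : ℕ in atTop, ‖fourierCoef (walkMeasure G μ n x) a‖ < t := by
  obtain ⟨δ, hδ0, hδ⟩ : ∃ δ > 0, ∀ z ∈ ratSet d N, δ ≤ dist x z := by
    rcases (ratSet d N).eq_empty_or_nonempty with h | h
    · exact ⟨1, one_pos, by simp [h]⟩
    · exact ⟨Metric.infDist x (ratSet d N),
        ((ratSet_finite d N).isClosed.notMem_iff_infDist_pos h).mp hx,
        fun z hz => Metric.infDist_le_dist_of_mem hz⟩
  have htend : Tendsto (fun n : ℕ => Real.exp (-lam * n)) atTop (nhds 0) := by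
    have heq : (fun n : ℕ => Real.exp (-lam * n)) = fun n : ℕ => Real.exp (-lam) ^ n := by
      funext n
      rw [← Real.exp_nat_mul]
      ring_nf
    rw [heq]
    exact tendsto_pow_atTop_nhds_zero_of_lt_one (Real.exp_nonneg _)
      (Real.exp_lt_one_iff.mpr (by linarith))
  have h1 : ∀ᶠ n : ℕ in atTop, Real.exp (-lam * n) < δ := htend.eventually_lt_const hδ0
  have h2 : ∀ᶠ n : ℕ in atTop, C * Real.log (znorm a / t) ≤ (n:ℝ) :=
    tendsto_natCast_atTop_atTop.eventually_ge_atTop _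
  filter_upwards [h1, h2] with n hn1 hn2
  by_contra hcon
  push_neg at hcon
  obtain ⟨q, v, hq, hqlt, hdist⟩ := hyp x t ht0 ht2 a ha n hcon hn2
  have hmem : (fun i => (((v i : ℝ) / q : ℝ) : AddCircle (1:ℝ))) ∈ ratSet d N :=
    ⟨q, v, hq, hN q hq hqlt, rfl⟩
  linarith [hδ _ hmem]

/-- Assuming the He–de Saxcé theorem for the random walk given by `μ` on
`G ≤ SL_d(ℤ)`: (i) for a rational point `v/q` in lowest terms, the Fourier
coefficients of `μ^{*n} * δ_{v/q}` at `a ≠ 0` have `limsup ≤ 2‖a‖ q^{−1/C}`;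
(ii) for an irrational point they tend to `0`. -/
theorem stmt10 (d : ℕ) (hd : 0 < d)
    (G : Subgroup (Matrix.SpecialLinearGroup (Fin d) ℤ))
    (μ : Measure G) [IsProbabilityMeasure μ]
    (lam C : ℝ) (hlam : 0 < lam) (hC : 0 < C)
    (hyp : ∀ (x : Fin d → AddCircle (1 : ℝ)) (t : ℝ), 0 < t → t < 1 / 2 →
      ∀ a : Fin d → ℤ, a ≠ 0 → ∀ n : ℕ,
        t ≤ ‖fourierCoef (walkMeasure G μ n x) a‖ →
        C * Real.log (znorm a / t) ≤ n →
        ∃ (q : ℕ) (v : Fin d → ℤ), 0 < q ∧ (q : ℝ) < (znorm a / t) ^ C ∧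
          dist x (fun i => (((v i : ℝ) / q : ℝ) : AddCircle (1 : ℝ)))
            ≤ Real.exp (-lam * n)) :
    (∀ (q : ℕ) (v : Fin d → ℤ), 0 < q →
        Int.gcd (Finset.univ.gcd v) (q : ℤ) = 1 →
        ∀ a : Fin d → ℤ, a ≠ 0 →
        limsup (fun n : ℕ => ‖fourierCoef
            (walkMeasure G μ n (fun i => (((v i : ℝ) / q : ℝ) : AddCircle (1 : ℝ)))) a‖)
          atTop ≤ 2 * znorm a * (q : ℝ) ^ (-(1 : ℝ) / C)) ∧
    (∀ y : Fin d → AddCircle (1 : ℝ),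
        (¬ ∃ w : Fin d → ℚ, y = fun i => (((w i : ℚ) : ℝ) : AddCircle (1 : ℝ))) →
        ∀ a : Fin d → ℤ, a ≠ 0 →
        limsup (fun n : ℕ =>
            ‖fourierCoef (walkMeasure G μ n y) a‖) atTop = 0) := by
  constructor
  · -- rational case
    intro q v hq hco a ha
    set x : Fin d → AddCircle (1:ℝ) := fun i => (((v i : ℝ) / q : ℝ) : AddCircle (1:ℝ)) with hx
    set u : ℕ → ℝ := fun n => ‖fourierCoef (walkMeasure G μ n x) a‖ with hu
    have hub : ∀ n, u n ≤ 1 := fun n => fourierCoef_abs_le _ _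
    have hcb : IsCoboundedUnder (· ≤ ·) atTop u :=
      isCoboundedUnder_le_of_eventually_le atTop
        (Eventually.of_forall fun n => norm_nonneg _)
    have hzn : 0 < znorm a := znorm_pos ha
    set B : ℝ := znorm a * (q:ℝ) ^ (-(1:ℝ)/C) with hBdef
    have hqR : (0:ℝ) < q := by exact_mod_cast hq
    have hBpos : 0 < B := mul_pos hzn (Real.rpow_pos_of_pos hqR _)
    have hgoal : 2 * znorm a * (q:ℝ) ^ (-(1:ℝ)/C) = 2 * B := by rw [hBdef]; ring
    rw [hgoal]
    by_cases hB2 : (1:ℝ) ≤ 2 * B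
    · calc limsup u atTop ≤ 1 := limsup_le_of_le hcb (Eventually.of_forall hub)
        _ ≤ 2 * B := hB2
    · push_neg at hB2
      have hBhalf : B < 1/2 := by linarith
      set t : ℝ := min (2*B) ((2*B+1)/4) with htdef
      have ht0 : 0 < t := lt_min (by linarith) (by linarith)
      have ht2 : t < 1/2 := lt_of_le_of_lt (min_le_right _ _) (by linarith)
      have htB : B < t := lt_min (by linarith) (by linarith)
      have htle : t ≤ 2*B := min_le_left _ _
      -- (znorm a / t) ^ C < q
      have hKq : (znorm a / t) ^ C < (q:ℝ) := by
        have h1 : znorm a / t < (q:ℝ) ^ ((1:ℝ)/C) := by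
          have hBq : znorm a / B = (q:ℝ) ^ ((1:ℝ)/C) := by
            rw [hBdef, neg_div, Real.rpow_neg (le_of_lt hqR)]
            field_simp
          rw [← hBq]
          exact div_lt_div_of_pos_left hzn hBpos htB
        calc (znorm a / t) ^ C < ((q:ℝ) ^ ((1:ℝ)/C)) ^ C :=
              Real.rpow_lt_rpow (by positivity) h1 hC
          _ = (q:ℝ) := by
              rw [← Real.rpow_mul (le_of_lt hqR), one_div,
                inv_mul_cancel₀ (ne_of_gt hC), Real.rpow_one]
      -- x is not a rational point with denominator ≤ q - 1
      have hxnot : x ∉ ratSet d (q - 1) := by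
        rintro ⟨q'', v'', hq'', hle, heq⟩
        have hdvd : q ∣ q'' := dvd_of_eq_rat q q'' v v'' hq hq'' hco heq
        have := Nat.le_of_dvd hq'' hdvd
        omega
      have hNbd : ∀ q' : ℕ, 0 < q' → (q':ℝ) < (znorm a / t) ^ C → q' ≤ q - 1 := by
        intro q' hq' hlt
        have : (q':ℝ) < (q:ℝ) := lt_trans hlt hKq
        have : q' < q := by exact_mod_cast this
        omega
      have hev := eventually_key G μ lam C hlam hyp x a ha t ht0 ht2 (q-1) hNbd hxnot
      calc limsup u atTop ≤ t := limsup_le_of_le hcb (hev.mono fun n h => le_of_lt h)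
        _ ≤ 2 * B := htle
  · -- irrational case
    intro y hy a ha
    set u : ℕ → ℝ := fun n => ‖fourierCoef (walkMeasure G μ n y) a‖ with hu
    have hub : ∀ n, u n ≤ 1 := fun n => fourierCoef_abs_le _ _
    have hcb : IsCoboundedUnder (· ≤ ·) atTop u :=
      isCoboundedUnder_le_of_eventually_le atTop
        (Eventually.of_forall fun n => norm_nonneg _)
    have key : ∀ t : ℝ, 0 < t → t < 1/2 → limsup u atTop ≤ t := by
      intro t ht0 ht2
      set N : ℕ := Nat.ceil ((znorm a / t) ^ C) with hNdef
      have hynot : y ∉ ratSet d N := by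
        rintro ⟨q, v, hq, hle, rfl⟩
        refine hy ⟨fun i => (v i : ℚ) / (q : ℚ), funext fun i => ?_⟩
        congr 1
        push_cast
        ring
      have hNbd : ∀ q' : ℕ, 0 < q' → (q':ℝ) < (znorm a / t) ^ C → q' ≤ N := by
        intro q' hq' hlt
        exact_mod_cast le_trans (le_of_lt hlt) (Nat.le_ceil _)
      have hev := eventually_key G μ lam C hlam hyp y a ha t ht0 ht2 N hNbd hynot
      exact limsup_le_of_le hcb (hev.mono fun n h => le_of_lt h)
    have h0 : (0:ℝ) ≤ limsup u atTop :=
      le_limsup_of_frequently_le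
        (Frequently.of_forall fun n => norm_nonneg _)
        (isBoundedUnder_of ⟨1, hub⟩)
    refine le_antisymm ?_ h0
    by_contra hL
    push_neg at hL
    have h1 := key (min (limsup u atTop / 2) (1/4))
      (lt_min (by linarith) (by norm_num)) (lt_of_le_of_lt (min_le_right _ _) (by norm_num))
    have h2 : min (limsup u atTop / 2) (1/4) ≤ limsup u atTop / 2 := min_le_left _ _
    linarith

end
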